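/- For 2 ≤ p ≤ ⌈n/2⌉−1 and p+1 ≤ i ≤ n−p, the convex vital element δ_{p,i} (the map i+j ↦ i−j on {i,…,i+p−1}) equals δ_{p+1,i}·ε, the product of the convex vital element of height p+1 at i with the idempotent ε that is the identity on {i−p+1, …, i+1}. -/

import Mathlib

/-- A partial transformation of the chain `[n]` (elements of `Fin n`). -/
def PT (n : ℕ) := Fin n → Option (Fin n)

/-- Right-to-left composition: `x (ρσ) = (x ρ) σ`. -/
def comp {n : ℕ} (ρ σ : PT n) : PT n := fun x => (ρ x).bind σ

/-- The identity partial transformation. -/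
def idPT (n : ℕ) : PT n := fun x => some x

/-- Isotone (order-preserving) on its domain. -/
def IsIsotone {n : ℕ} (ρ : PT n) : Prop :=
  ∀ x x' y y' : Fin n, ρ x = some y → ρ x' = some y' → x ≤ x' → y ≤ y'

/-- Antitone (order-reversing) on its domain. -/
def IsAntitone {n : ℕ} (ρ : PT n) : Prop :=
  ∀ x x' y y' : Fin n, ρ x = some y → ρ x' = some y' → x ≤ x' → y' ≤ y

/-- Order-decreasing on its domain. -/
def IsDecreasing {n : ℕ} (ρ : PT n) : Prop :=
  ∀ x y : Fin n, ρ x = some y → y ≤ x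

/-- Member of the monoid `DORPₙ`: monotone and order-decreasing. -/
def IsDORP {n : ℕ} (ρ : PT n) : Prop :=
  IsDecreasing ρ ∧ (IsIsotone ρ ∨ IsAntitone ρ)

/-- The image of a partial transformation. -/
def im {n : ℕ} (ρ : PT n) : Set (Fin n) := {y | ∃ x, ρ x = some y}

/-- The domain of a partial transformation. -/
def domSet {n : ℕ} (ρ : PT n) : Set (Fin n) := {x | ρ x ≠ none}

/-- The height of a partial transformation: the size of its image. -/
noncomputable def height {n : ℕ} (ρ : PT n) : ℕ := (im ρ).ncard

/-- Equality of kernels: same domain and the same partition into fibers. -/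
def kerEq {n : ℕ} (ρ σ : PT n) : Prop :=
  (∀ x, ρ x = none ↔ σ x = none) ∧ (∀ x y, ρ x = ρ y ↔ σ x = σ y)

/-- For `2 ≤ p ≤ ⌈n/2⌉ − 1` and `p+1 ≤ i ≤ n−p` (1-indexed), the convex vital element
`δ_{p,i}` equals `δ_{p+1,i}·ε`, where `ε` is the identity on `{i−p+1, …, i+1}`.
Here 1-indexed points `k ∈ [n]` correspond to `x : Fin n` with `x.val + 1 = k`. -/
theorem stmt18 (n p i : ℕ) (h2 : 2 ≤ p) (hpn : p + 1 ≤ (n + 1) / 2)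
    (hi1 : p + 1 ≤ i) (hi2 : i ≤ n - p) (ρ ρ' ε : PT n)
    (hρ : ∀ x y : Fin n, ρ x = some y ↔
      (i ≤ x.val + 1 ∧ x.val + 1 ≤ i + p - 1 ∧ (y.val + 1) + (x.val + 1) = 2 * i))
    (hρ' : ∀ x y : Fin n, ρ' x = some y ↔
      (i ≤ x.val + 1 ∧ x.val + 1 ≤ i + p ∧ (y.val + 1) + (x.val + 1) = 2 * i))
    (hε : ∀ x y : Fin n, ε x = some y ↔
      (i - p + 1 ≤ x.val + 1 ∧ x.val + 1 ≤ i + 1 ∧ y = x)) :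
    comp ρ' ε = ρ := by
  funext x
  simp only [comp]
  cases h : ρ' x with
  | none =>
    cases h2' : ρ x with
    | none => rfl
    | some y =>
      exfalso
      obtain ⟨ha, hb, hc⟩ := (hρ x y).mp h2'
      have hxx : ρ' x = some y := (hρ' x y).mpr ⟨ha, by omega, hc⟩
      rw [h] at hxx
      cases hxx
  | some y' =>
    obtain ⟨ha, hb, hc⟩ := (hρ' x y').mp h
    by_cases hcase : x.val + 1 ≤ i + p - 1
    · have hε' : ε y' = some y' := (hε y' y').mpr ⟨by omega, by omega, rfl⟩
      have hρx : ρ x = some y' := (hρ x y').mpr ⟨ha, hcase, hc⟩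
      rw [hρx]; exact hε'
    · have hεnone : ε y' = none := by
        cases hh : ε y' with
        | none => rfl
        | some z =>
          obtain ⟨h1, h2'', h3⟩ := (hε y' z).mp hh
          omega
      have hρnone : ρ x = none := by
        cases hh : ρ x with
        | none => rfl
        | some z =>
          obtain ⟨h1, h2'', h3⟩ := (hρ x z).mp hh
          omega
      rw [hρnone]; exact hεnone
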